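/- Let q be a square prime power, H a non-degenerate Hermitian curve in PG(2,q), P a point of H, L the tangent to H at P, and L₁,…,L_{t−1} (for t ≤ √q + 1) distinct secant lines through P distinct from L. Let ⊥ be the unitary polarity defining H. Then B = H ∪ L₁ ∪ ⋯ ∪ L_{t−1} ∪ {L₁^⊥,…,L_{t−1}^⊥} has |B| = q√q + 1 + (t−1)(q − √q + 1), every line meets B in at least t points, and every point of B lies on a line meeting B in exactly t points. -/

import Mathlib

/-- Incidence between a point and a line of PG(2,q) in homogeneous coordinates. -/
def PGinc {F : Type*} [Field F] (x ℓ : Projectivization F (Fin 3 → F)) : Prop :=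
  ∑ i : Fin 3, ℓ.rep i * x.rep i = 0

/-- The Hermitian curve `x^(s+1) + y^(s+1) + z^(s+1) = 0` in PG(2,q), `s = √q`. -/
def HermitianCurve (F : Type*) [Field F] (s : ℕ) :
    Set (Projectivization F (Fin 3 → F)) :=
  {x | ∑ i : Fin 3, x.rep i ^ (s + 1) = 0}

open Classical in
/-- The pole of a line under the unitary polarity associated to the Hermitian curve:
in coordinates, the line with coefficient vector `w` is sent to the point `(wᵢ^s)ᵢ`. -/
noncomputable def PGpole {F : Type*} [Field F] (s : ℕ)
    (ℓ : Projectivization F (Fin 3 → F)) : Projectivization F (Fin 3 → F) :=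
  if h : (fun i => ℓ.rep i ^ s) ≠ (0 : Fin 3 → F) then Projectivization.mk F _ h else ℓ

namespace Herm
open Projectivization
set_option linter.unusedSectionVars false
variable {F : Type*} [Field F]

def dot (w v : Fin 3 → F) : F := ∑ i, w i * v i

def cross (a b : Fin 3 → F) : Fin 3 → F :=
  ![a 1 * b 2 - a 2 * b 1, a 2 * b 0 - a 0 * b 2, a 0 * b 1 - a 1 * b 0]

lemma exists_ne_zero {w : Fin 3 → F} (hw : w ≠ 0) : ∃ i, w i ≠ 0 := by
  by_contra h
  push_neg at h
  exact hw (funext h)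

lemma dot_cross_left (a b : Fin 3 → F) : dot (cross a b) a = 0 := by
  simp [dot, cross, Fin.sum_univ_three]; ring

lemma dot_cross_right (a b : Fin 3 → F) : dot (cross a b) b = 0 := by
  simp [dot, cross, Fin.sum_univ_three]; ring

lemma cross_eq_zero {a b : Fin 3 → F} (h : cross a b = 0) (ha : a ≠ 0) :
    ∃ c : F, b = c • a := by
  have h0 : a 1 * b 2 - a 2 * b 1 = 0 := congrFun h 0
  have h1 : a 2 * b 0 - a 0 * b 2 = 0 := congrFun h 1
  have h2 : a 0 * b 1 - a 1 * b 0 = 0 := congrFun h 2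
  obtain ⟨i, hi⟩ := exists_ne_zero ha
  have key : ∃ i : Fin 3, a i ≠ 0 ∧ a i • b = b i • a := by
    fin_cases i
    · refine ⟨0, hi, funext fun j => ?_⟩
      fin_cases j
      · show a 0 * b 0 = b 0 * a 0; ring
      · show a 0 * b 1 = b 0 * a 1; linear_combination h2
      · show a 0 * b 2 = b 0 * a 2; linear_combination -h1
    · refine ⟨1, hi, funext fun j => ?_⟩
      fin_cases j
      · show a 1 * b 0 = b 1 * a 0; linear_combination -h2
      · show a 1 * b 1 = b 1 * a 1; ring
      · show a 1 * b 2 = b 1 * a 2; linear_combination h0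
    · refine ⟨2, hi, funext fun j => ?_⟩
      fin_cases j
      · show a 2 * b 0 = b 2 * a 0; linear_combination h1
      · show a 2 * b 1 = b 2 * a 1; linear_combination -h0
      · show a 2 * b 2 = b 2 * a 2; ring
  obtain ⟨i, hai, hab⟩ := key
  refine ⟨b i / a i, ?_⟩
  have := congrArg (fun z => (a i)⁻¹ • z) hab
  simp only [smul_smul] at this
  rw [inv_mul_cancel₀ hai, one_smul] at this
  conv_lhs => rw [this]
  rw [div_eq_inv_mul]

lemma cross_cross (a b v : Fin 3 → F) :
    cross (cross a b) v = dot a v • b - dot b v • a := by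
  funext j
  fin_cases j <;>
    simp [cross, dot, Fin.sum_univ_three] <;> ring

lemma cross_ne_zero {a b : Fin 3 → F} (ha : a ≠ 0) (hb : ∀ c : F, b ≠ c • a) :
    cross a b ≠ 0 := by
  intro h
  obtain ⟨c, hc⟩ := cross_eq_zero h ha
  exact hb c hc

lemma perp_mem_span {a b v : Fin 3 → F} (ha : a ≠ 0) (hb : ∀ c : F, b ≠ c • a)
    (hva : dot a v = 0) (hvb : dot b v = 0) : ∃ c : F, v = c • cross a b := by
  apply cross_eq_zero _ (cross_ne_zero ha hb)
  rw [cross_cross, hva, hvb]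
  simp

lemma perp_unique {a b w w' : Fin 3 → F} (ha : a ≠ 0) (hb : ∀ c : F, b ≠ c • a)
    (hw : w ≠ 0) (hwa : dot a w = 0) (hwb : dot b w = 0)
    (hwa' : dot a w' = 0) (hwb' : dot b w' = 0) : ∃ c : F, w' = c • w := by
  obtain ⟨c1, hc1⟩ := perp_mem_span ha hb hwa hwb
  have hc10 : c1 ≠ 0 := by rintro rfl; simp at hc1; exact hw hc1
  obtain ⟨c2, hc2⟩ := perp_mem_span ha hb hwa' hwb'
  exact ⟨c2 / c1, by rw [hc2, hc1, smul_smul]; congr 1; field_simp⟩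

lemma exists_perp_basis {w : Fin 3 → F} (hw : w ≠ 0) :
    ∃ a b : Fin 3 → F, dot w a = 0 ∧ dot w b = 0 ∧ a ≠ 0 ∧ (∀ c : F, b ≠ c • a) ∧
      (∀ v, dot w v = 0 → ∃ x y : F, v = x • a + y • b) := by
  obtain ⟨i, hi⟩ := exists_ne_zero hw
  fin_cases i
  · have h0 : w 0 ≠ 0 := hi
    refine ⟨![-(w 1)/(w 0), 1, 0], ![-(w 2)/(w 0), 0, 1], ?_, ?_, ?_, ?_, ?_⟩
    · simp only [dot, Fin.sum_univ_three, Matrix.cons_val_zero, Matrix.cons_val_one,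
        Matrix.head_cons, Matrix.cons_val_two, Matrix.tail_cons]
      field_simp
      all_goals ring
    · simp only [dot, Fin.sum_univ_three, Matrix.cons_val_zero, Matrix.cons_val_one,
        Matrix.head_cons, Matrix.cons_val_two, Matrix.tail_cons]
      field_simp
      all_goals ring
    · intro h; have := congrFun h 1; simp at this
    · intro c h; have := congrFun h 2; simp at this
    · intro v hv
      simp only [dot, Fin.sum_univ_three] at hv
      refine ⟨v 1, v 2, funext fun j => ?_⟩
      fin_cases j
      · show v 0 = v 1 * (-(w 1)/(w 0)) + v 2 * (-(w 2)/(w 0))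
        rw [← mul_div_assoc, ← mul_div_assoc, ← add_div, eq_div_iff ?hh]
        case hh => assumption
        linear_combination hv
      · show v 1 = v 1 * 1 + v 2 * 0
        ring
      · show v 2 = v 1 * 0 + v 2 * 1
        ring
  · have h1 : w 1 ≠ 0 := hi
    refine ⟨![1, -(w 0)/(w 1), 0], ![0, -(w 2)/(w 1), 1], ?_, ?_, ?_, ?_, ?_⟩
    · simp only [dot, Fin.sum_univ_three, Matrix.cons_val_zero, Matrix.cons_val_one,
        Matrix.head_cons, Matrix.cons_val_two, Matrix.tail_cons]
      field_simp
      all_goals ring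
    · simp only [dot, Fin.sum_univ_three, Matrix.cons_val_zero, Matrix.cons_val_one,
        Matrix.head_cons, Matrix.cons_val_two, Matrix.tail_cons]
      field_simp
      all_goals ring
    · intro h; have := congrFun h 0; simp at this
    · intro c h; have := congrFun h 2; simp at this
    · intro v hv
      simp only [dot, Fin.sum_univ_three] at hv
      refine ⟨v 0, v 2, funext fun j => ?_⟩
      fin_cases j
      · show v 0 = v 0 * 1 + v 2 * 0
        ring
      · show v 1 = v 0 * (-(w 0)/(w 1)) + v 2 * (-(w 2)/(w 1))
        rw [← mul_div_assoc, ← mul_div_assoc, ← add_div, eq_div_iff ?hh]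
        case hh => assumption
        linear_combination hv
      · show v 2 = v 0 * 0 + v 2 * 1
        ring
  · have h2 : w 2 ≠ 0 := hi
    refine ⟨![1, 0, -(w 0)/(w 2)], ![0, 1, -(w 1)/(w 2)], ?_, ?_, ?_, ?_, ?_⟩
    · simp only [dot, Fin.sum_univ_three, Matrix.cons_val_zero, Matrix.cons_val_one,
        Matrix.head_cons, Matrix.cons_val_two, Matrix.tail_cons]
      field_simp
      all_goals ring
    · simp only [dot, Fin.sum_univ_three, Matrix.cons_val_zero, Matrix.cons_val_one,
        Matrix.head_cons, Matrix.cons_val_two, Matrix.tail_cons]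
      field_simp
      all_goals ring
    · intro h; have := congrFun h 0; simp at this
    · intro c h; have := congrFun h 1; simp at this
    · intro v hv
      simp only [dot, Fin.sum_univ_three] at hv
      refine ⟨v 0, v 1, funext fun j => ?_⟩
      fin_cases j
      · show v 0 = v 0 * 1 + v 1 * 0
        ring
      · show v 1 = v 0 * 0 + v 1 * 1
        ring
      · show v 2 = v 0 * (-(w 0)/(w 2)) + v 1 * (-(w 1)/(w 2))
        rw [← mul_div_assoc, ← mul_div_assoc, ← add_div, eq_div_iff ?hh]
        case hh => assumption
        linear_combination hv

def hm (s : ℕ) (v w : Fin 3 → F) : F := ∑ i, v i ^ s * w i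

def conj (s : ℕ) (v : Fin 3 → F) : Fin 3 → F := fun i => v i ^ s

lemma dot_comm (w v : Fin 3 → F) : dot w v = dot v w := by
  simp [dot, mul_comm]

lemma hm_eq_dot (s : ℕ) (v w : Fin 3 → F) : hm s v w = dot (conj s v) w := rfl

lemma exists_rep_smul (v : Fin 3 → F) (hv : v ≠ 0) :
    ∃ c : F, c ≠ 0 ∧ (Projectivization.mk F v hv).rep = c • v := by
  have h := Projectivization.mk_rep (Projectivization.mk F v hv)
  rw [Projectivization.mk_eq_mk_iff] at h
  obtain ⟨a, ha⟩ := h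
  exact ⟨(a : F), a.ne_zero, by rw [← ha, Units.smul_def]⟩

lemma conj_ne_zero (s : ℕ) {v : Fin 3 → F} (hv : v ≠ 0) : conj s v ≠ 0 := by
  intro h
  apply hv
  funext i
  have := congrFun h i
  simp only [conj, Pi.zero_apply, pow_eq_zero_iff'] at this
  rcases Nat.eq_zero_or_pos s with hs | hs
  · exfalso; exact this.2 hs
  · exact this.1

lemma dot_smul (c : F) (w v : Fin 3 → F) : dot (c • w) v = c * dot w v := by
  simp [dot, Finset.mul_sum, mul_assoc]

lemma dot_smul_right (c : F) (w v : Fin 3 → F) : dot w (c • v) = c * dot w v := by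
  rw [dot_comm, dot_smul, dot_comm]

lemma inc_mk {v w : Fin 3 → F} (hv : v ≠ 0) (hw : w ≠ 0) :
    PGinc (Projectivization.mk F v hv) (Projectivization.mk F w hw) ↔ dot w v = 0 := by
  obtain ⟨c, hc0, hc⟩ := exists_rep_smul v hv
  obtain ⟨d, hd0, hd⟩ := exists_rep_smul w hw
  unfold PGinc
  rw [show (∑ i : Fin 3, (Projectivization.mk F w hw).rep i * (Projectivization.mk F v hv).rep i)
      = dot (Projectivization.mk F w hw).rep (Projectivization.mk F v hv).rep from rfl,
    hc, hd, dot_smul, dot_smul_right]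
  constructor
  · intro h
    rcases mul_eq_zero.mp h with h | h
    · exact absurd h hd0
    · rcases mul_eq_zero.mp h with h | h
      · exact absurd h hc0
      · exact h
  · intro h; rw [h]; ring

lemma inc_symm (x ℓ : Projectivization F (Fin 3 → F)) : PGinc x ℓ ↔ PGinc ℓ x := by
  unfold PGinc
  constructor <;> intro h <;> rw [← h] <;> exact Finset.sum_congr rfl fun i _ => by ring

lemma herm_mk (s : ℕ) {v : Fin 3 → F} (hv : v ≠ 0) :
    Projectivization.mk F v hv ∈ HermitianCurve F s ↔ hm s v v = 0 := by
  obtain ⟨c, hc0, hc⟩ := exists_rep_smul v hv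
  unfold HermitianCurve hm
  simp only [Set.mem_setOf_eq, hc]
  have h1 : ∀ i : Fin 3, (c • v) i ^ (s+1) = c^(s+1) * v i ^ (s+1) := by
    intro i; simp [mul_pow]
  rw [Finset.sum_congr rfl fun i _ => h1 i, ← Finset.mul_sum]
  have h2 : ∑ i : Fin 3, v i ^ (s+1) = ∑ i : Fin 3, v i ^ s * v i :=
    Finset.sum_congr rfl fun i _ => by rw [pow_succ]
  rw [h2]
  constructor
  · intro h
    rcases mul_eq_zero.mp h with h | h
    · exact absurd h (pow_ne_zero _ hc0)
    · exact h
  · intro h; rw [h, mul_zero]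

lemma pole_mk (s : ℕ) (hs : s ≠ 0) {w : Fin 3 → F} (hw : w ≠ 0) :
    PGpole s (Projectivization.mk F w hw)
      = Projectivization.mk F (conj s w) (conj_ne_zero s hw) := by
  obtain ⟨c, hc0, hc⟩ := exists_rep_smul w hw
  unfold PGpole
  have key : (fun i => (Projectivization.mk F w hw).rep i ^ s) = (c ^ s) • conj s w := by
    funext i
    simp [hc, conj, mul_pow]
  have hne : (fun i => (Projectivization.mk F w hw).rep i ^ s) ≠ (0 : Fin 3 → F) := by
    rw [key]
    exact smul_ne_zero (pow_ne_zero _ hc0) (conj_ne_zero s hw)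
  rw [dif_pos hne]
  rw [Projectivization.mk_eq_mk_iff]
  refine ⟨Units.mk0 (c^s) (pow_ne_zero _ hc0), ?_⟩
  rw [key, Units.smul_def]; norm_num


section withfin
open Polynomial
variable [Fintype F] {s : ℕ}

section basic
variable (hs2 : 2 ≤ s) (hcard : Fintype.card F = s * s)
  (hadd : ∀ a b : F, (a + b) ^ s = a ^ s + b ^ s)

include hcard in
lemma hpow (a : F) : (a ^ s) ^ s = a := by
  rw [← pow_mul, ← hcard, FiniteField.pow_card]

include hs2 hadd in
lemma hneg (a : F) : (-a) ^ s = -(a ^ s) := by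
  have h := hadd a (-a)
  simp only [add_neg_cancel] at h
  rw [zero_pow (by omega : s ≠ 0)] at h
  exact eq_neg_of_add_eq_zero_right h.symm

include hs2 hadd in
lemma hsub (a b : F) : (a - b) ^ s = a ^ s - b ^ s := by
  rw [sub_eq_add_neg, hadd, hneg hs2 hadd, sub_eq_add_neg]

include hs2 hadd in
lemma pow_s_inj {a b : F} (h : a ^ s = b ^ s) : a = b := by
  have : (a - b) ^ s = 0 := by rw [hsub hs2 hadd, h, sub_self]
  have := pow_eq_zero_iff (by omega : s ≠ 0) |>.mp this
  linear_combination this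

/-- set of roots of a nonzero polynomial has ncard ≤ natDegree -/
lemma ncard_roots_le {p : Polynomial F} (hp : p ≠ 0) {S : Set F}
    (hS : ∀ u ∈ S, p.IsRoot u) : S.ncard ≤ p.natDegree := by
  classical
  have hsub : S ⊆ ↑p.roots.toFinset := by
    intro u hu
    simp only [Finset.coe_sort_coe, Multiset.mem_toFinset, Finset.mem_coe]
    exact (Polynomial.mem_roots hp).mpr (hS u hu)
  calc S.ncard ≤ (↑p.roots.toFinset : Set F).ncard :=
        Set.ncard_le_ncard hsub (Set.toFinite _)
    _ = p.roots.toFinset.card := Set.ncard_coe_finset _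
    _ ≤ Multiset.card p.roots := Multiset.toFinset_card_le _
    _ ≤ p.natDegree := Polynomial.card_roots' p

lemma filter_card_eq_ncard (p : F → Prop) [DecidablePred p] :
    (Finset.univ.filter p).card = {u : F | p u}.ncard := by
  rw [show {u : F | p u} = ↑(Finset.univ.filter p) by ext u; simp]
  rw [Set.ncard_coe_finset]

/-- additive map fiber counting -/
lemma fiber_ncard_eq (φ : F → F) (h0 : φ 0 = 0)
    (hA : ∀ x y : F, φ (x + y) = φ x + φ y) {v : F} (hv : ∃ u, φ u = v) :
    {u : F | φ u = v}.ncard = {u : F | φ u = 0}.ncard := by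
  obtain ⟨u₀, hu₀⟩ := hv
  have hsub' : ∀ x y : F, φ (x - y) = φ x - φ y := by
    intro x y
    have := hA (x - y) y
    rw [sub_add_cancel] at this
    linear_combination -this
  have himg : {u : F | φ u = v} = (fun u => u + u₀) '' {u : F | φ u = 0} := by
    ext u
    simp only [Set.mem_setOf_eq, Set.mem_image]
    constructor
    · intro hu
      exact ⟨u - u₀, by rw [hsub' u u₀, hu, hu₀, sub_self], by ring⟩
    · rintro ⟨w, hw, rfl⟩
      rw [hA, hw, hu₀, zero_add]
  rw [himg, Set.ncard_image_of_injective _ (add_left_injective u₀)]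

include hcard in
lemma range_mul_ker (φ : F → F) (h0 : φ 0 = 0)
    (hA : ∀ x y : F, φ (x + y) = φ x + φ y) :
    (Set.range φ).ncard * {u : F | φ u = 0}.ncard = s * s := by
  classical
  have key := Finset.card_eq_sum_card_fiberwise
    (f := φ) (s := Finset.univ) (t := Finset.univ.image φ)
    (fun x _ => Finset.mem_image_of_mem φ (Finset.mem_univ x))
  have hfib : ∀ v ∈ Finset.univ.image φ,
      (Finset.univ.filter (fun u => φ u = v)).card = {u : F | φ u = 0}.ncard := by
    intro v hv
    rw [filter_card_eq_ncard]
    apply fiber_ncard_eq φ h0 hA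
    simp only [Finset.mem_image, Finset.mem_univ, true_and] at hv
    exact hv
  rw [Finset.sum_congr rfl hfib, Finset.sum_const, smul_eq_mul] at key
  have himg : (Finset.univ.image φ).card = (Set.range φ).ncard := by
    rw [show Set.range φ = ↑(Finset.univ.image φ) by ext u; simp, Set.ncard_coe_finset]
  rw [Finset.card_univ, hcard, himg] at key
  exact key.symm

include hs2 in
lemma Fs_ncard_le : {a : F | a ^ s = a}.ncard ≤ s := by
  have hp : (X ^ s - X : Polynomial F) ≠ 0 := by
    intro h
    have := congrArg (fun p => Polynomial.coeff p s) h
    simp only [coeff_sub, coeff_X_pow, if_pos rfl, coeff_X, coeff_zero] at this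
    rw [if_neg (by omega : ¬ (1 = s))] at this
    norm_num at this
  have := ncard_roots_le hp (S := {a : F | a ^ s = a}) (fun u hu => by
    simp only [IsRoot, eval_sub, eval_pow, eval_X]
    rw [Set.mem_setOf_eq] at hu
    rw [hu, sub_self])
  calc {a : F | a ^ s = a}.ncard ≤ (X ^ s - X : Polynomial F).natDegree := this
    _ ≤ s := by
        apply le_trans (Polynomial.natDegree_sub_le _ _)
        simp [Polynomial.natDegree_X_pow]
        omega

include hs2 hcard hadd in
lemma sol_count {c d : F} (hc : c ≠ 0) (hd : d ^ s = d) :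
    {u : F | c * u ^ s + c ^ s * u + d = 0}.ncard = s := by
  classical
  set φ : F → F := fun u => c * u ^ s + c ^ s * u with hφ
  have h0 : φ 0 = 0 := by simp [hφ, zero_pow (by omega : s ≠ 0)]
  have hA : ∀ x y : F, φ (x + y) = φ x + φ y := by
    intro x y; simp only [hφ, hadd x y]; ring
  -- kernel bound
  have hker_le : {u : F | φ u = 0}.ncard ≤ s := by
    have hp : (C c * X ^ s + C (c ^ s) * X : Polynomial F) ≠ 0 := by
      intro h
      have := congrArg (fun p => Polynomial.coeff p s) h
      simp only [coeff_add, coeff_C_mul, coeff_X_pow, if_pos rfl, coeff_X, coeff_zero,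
        mul_one] at this
      rw [if_neg (by omega : ¬ (1 = s))] at this
      simp at this
      exact hc this
    refine le_trans (ncard_roots_le hp (fun u hu => ?_)) ?_
    · simp only [IsRoot, eval_add, eval_mul, eval_C, eval_pow, eval_X]
      exact hu
    · refine le_trans (Polynomial.natDegree_add_le _ _) ?_
      simp only [max_le_iff]
      constructor
      · exact le_trans (Polynomial.natDegree_C_mul_le _ _) (by simp)
      · exact le_trans (Polynomial.natDegree_C_mul_le _ _) (by simp <;> omega)
  -- range bound
  have hrange_sub : Set.range φ ⊆ {a : F | a ^ s = a} := by
    rintro _ ⟨u, rfl⟩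
    simp only [Set.mem_setOf_eq, hφ]
    rw [hadd, mul_pow, mul_pow, hpow hcard u, hpow hcard c]
    ring
  have hrange_le : (Set.range φ).ncard ≤ s :=
    le_trans (Set.ncard_le_ncard hrange_sub (Set.toFinite _)) (Fs_ncard_le hs2)
  have hmul := range_mul_ker hcard φ h0 hA
  have hker_eq : {u : F | φ u = 0}.ncard = s ∧ (Set.range φ).ncard = s := by
    constructor
    · by_contra h
      have h1 : {u : F | φ u = 0}.ncard < s := lt_of_le_of_ne hker_le h
      nlinarith [hmul, hrange_le, hker_le]
    · by_contra h
      have h1 : (Set.range φ).ncard < s := lt_of_le_of_ne hrange_le h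
      nlinarith [hmul, hker_le]
  -- -d in range
  have hFs : ({a : F | a ^ s = a}).ncard ≤ (Set.range φ).ncard := by
    rw [hker_eq.2]; exact Fs_ncard_le hs2
  have hrange_eq : Set.range φ = {a : F | a ^ s = a} :=
    Set.eq_of_subset_of_ncard_le hrange_sub hFs (Set.toFinite _)
  have hmem : -d ∈ Set.range φ := by
    rw [hrange_eq]
    simp only [Set.mem_setOf_eq]
    rw [hneg hs2 hadd, hd]
  have : {u : F | c * u ^ s + c ^ s * u + d = 0} = {u : F | φ u = -d} := by
    ext u
    simp only [Set.mem_setOf_eq, hφ]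
    constructor <;> intro h <;> linear_combination h
  rw [this, fiber_ncard_eq φ h0 hA hmem, hker_eq.1]

include hs2 hcard hadd in
lemma exists_root_special {e c d : F} (he : e ≠ 0) (hes : e ^ s = e) (hd : d ^ s = d) :
    ∃ u : F, e * u ^ (s + 1) + (c * u ^ s + c ^ s * u + d) = 0 := by
  classical
  by_contra hno
  push_neg at hno
  set g : F → F := fun u => e * u ^ (s + 1) + (c * u ^ s + c ^ s * u + d) with hg
  -- values of g lie in Fs \ {0}
  have hval : ∀ u : F, (g u) ^ s = g u ∧ g u ≠ 0 := by
    intro u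
    refine ⟨?_, hno u⟩
    simp only [hg]
    rw [hadd, hadd, hadd, mul_pow, mul_pow, mul_pow]
    rw [show (u ^ (s+1)) ^ s = u ^ (s+1) from by
      rw [pow_succ u s, mul_pow, hpow hcard u]; exact mul_comm u (u ^ s)]
    rw [hes, hpow hcard u, hpow hcard c, hd]
    ring
  -- fibers bounded by s+1
  have hfib : ∀ v : F, (Finset.univ.filter (fun u => g u = v)).card ≤ s + 1 := by
    intro v
    rw [filter_card_eq_ncard]
    have hp : (C e * X ^ (s+1) + (C c * X ^ s + C (c ^ s) * X + C (d - v)) :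
        Polynomial F) ≠ 0 := by
      intro h
      have h2 := congrArg (fun p => Polynomial.coeff p (s+1)) h
      simp only [coeff_add, coeff_C_mul, coeff_X_pow, if_pos rfl, coeff_X, coeff_C,
        coeff_zero, mul_one] at h2
      rw [if_neg (by omega : ¬ (1 = s + 1)), if_neg (by omega : ¬ (s + 1 = 0))] at h2
      simp at h2
      exact he h2
    refine le_trans (ncard_roots_le hp (fun u hu => ?_)) ?_
    · simp only [IsRoot, eval_add, eval_mul, eval_C, eval_pow, eval_X]
      rw [Set.mem_setOf_eq] at hu
      linear_combination hu
    · refine le_trans (Polynomial.natDegree_add_le _ _) ?_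
      simp only [max_le_iff]
      refine ⟨le_trans (Polynomial.natDegree_C_mul_le _ _) (by simp), ?_⟩
      refine le_trans (Polynomial.natDegree_add_le _ _) ?_
      simp only [max_le_iff]
      refine ⟨le_trans (Polynomial.natDegree_add_le _ _) ?_, by simp⟩
      simp only [max_le_iff]
      refine ⟨le_trans (Polynomial.natDegree_C_mul_le _ _) (by simp <;> omega), ?_⟩
      exact le_trans (Polynomial.natDegree_C_mul_le _ _) (by simp <;> omega)
  -- image inside Fs \ {0}
  have himg : Finset.univ.image g ⊆ Finset.univ.filter (fun a : F => a ^ s = a ∧ a ≠ 0) := by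
    intro v hv
    simp only [Finset.mem_image, Finset.mem_univ, true_and] at hv
    obtain ⟨u, rfl⟩ := hv
    simp only [Finset.mem_filter, Finset.mem_univ, true_and]
    exact hval u
  have hFs01 : (Finset.univ.filter (fun a : F => a ^ s = a ∧ a ≠ 0)).card ≤ s - 1 := by
    have h1 : (Finset.univ.filter (fun a : F => a ^ s = a)).card ≤ s := by
      rw [filter_card_eq_ncard]; exact Fs_ncard_le hs2
    have h2 : Finset.univ.filter (fun a : F => a ^ s = a ∧ a ≠ 0) ⊆
        (Finset.univ.filter (fun a : F => a ^ s = a)).erase 0 := by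
      intro a ha
      simp only [Finset.mem_filter, Finset.mem_univ, true_and] at ha
      rw [Finset.mem_erase]
      exact ⟨ha.2, by simp [ha.1]⟩
    calc (Finset.univ.filter (fun a : F => a ^ s = a ∧ a ≠ 0)).card
        ≤ ((Finset.univ.filter (fun a : F => a ^ s = a)).erase 0).card :=
          Finset.card_le_card h2
      _ ≤ (Finset.univ.filter (fun a : F => a ^ s = a)).card - 1 := by
          rw [Finset.card_erase_of_mem]
          simp [zero_pow (by omega : s ≠ 0)]
      _ ≤ s - 1 := by omega
  have key := Finset.card_eq_sum_card_fiberwise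
    (f := g) (s := Finset.univ) (t := Finset.univ.image g)
    (fun x _ => Finset.mem_image_of_mem g (Finset.mem_univ x))
  have hle : (Finset.univ : Finset F).card ≤ (s - 1) * (s + 1) := by
    rw [key]
    calc (∑ v ∈ Finset.univ.image g, (Finset.univ.filter (fun u => g u = v)).card)
        ≤ ∑ _v ∈ Finset.univ.image g, (s + 1) := Finset.sum_le_sum (fun v _ => hfib v)
      _ = (Finset.univ.image g).card * (s + 1) := by rw [Finset.sum_const, smul_eq_mul]
      _ ≤ (s - 1) * (s + 1) := by
          apply Nat.mul_le_mul_right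
          exact le_trans (Finset.card_le_card himg) hFs01
  rw [Finset.card_univ, hcard] at hle
  have h4 : 4 ≤ s * s := Nat.mul_le_mul hs2 hs2
  have heq : (s - 1) * (s + 1) = s * s - 1 := by
    obtain ⟨k, rfl⟩ : ∃ k, s = k + 1 := ⟨s - 1, by omega⟩
    have h1 : k * (k + 1 + 1) + 1 = (k + 1) * (k + 1) := by ring
    simp only [Nat.add_sub_cancel]
    omega
  omega

end basic

end withfin

section layer3
open Polynomial Projectivization
variable [Fintype F] {s : ℕ}
variable (hs2 : 2 ≤ s) (hcard : Fintype.card F = s * s)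
  (hadd : ∀ a b : F, (a + b) ^ s = a ^ s + b ^ s)

/-- derive the additive property of s-power from primality -/
lemma derive_hadd (hq1 : IsPrimePow (Fintype.card F)) (hsq : s * s = Fintype.card F) :
    ∀ a b : F, (a + b) ^ s = a ^ s + b ^ s := by
  obtain ⟨p, k, hp, hk, hpk⟩ := hq1
  have hp' : Nat.Prime p := Nat.prime_iff.mpr hp
  obtain ⟨n, hcp, hcardc⟩ := FiniteField.card F (ringChar F)
  have hpc : p = ringChar F := by
    have hdvd : p ∣ (ringChar F) ^ (n : ℕ) := by
      rw [← hcardc, ← hpk]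
      exact dvd_pow_self p (by omega)
    have h2 := hp'.dvd_of_dvd_pow hdvd
    exact ((Nat.prime_dvd_prime_iff_eq hp' hcp).mp h2)
  have hsdvd : s ∣ (ringChar F) ^ (n : ℕ) := by
    rw [← hcardc, ← hsq]
    exact Dvd.intro s rfl
  obtain ⟨j, hj, hsj⟩ := (Nat.dvd_prime_pow hcp).mp hsdvd
  haveI : Fact (Nat.Prime (ringChar F)) := ⟨hcp⟩
  intro a b
  rw [hsj]
  exact add_pow_char_pow a b (ringChar F) j

lemma derive_hs2 (hsq : s * s = Fintype.card F) : 2 ≤ s := by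
  by_contra h
  push_neg at h
  have h1 : s ≤ 1 := by omega
  have := Fintype.one_lt_card (α := F)
  have h2 : s * s ≤ 1 := Nat.mul_le_mul h1 h1
  omega

include hcard hadd in
lemma hm_conj (v w : Fin 3 → F) : (hm s v w) ^ s = hm s w v := by
  simp only [hm, Fin.sum_univ_three]
  rw [hadd, hadd, mul_pow, mul_pow, mul_pow, hpow hcard, hpow hcard, hpow hcard]
  ring

include hs2 hcard hadd in
lemma hm_zero_iff (v w : Fin 3 → F) : hm s v w = 0 ↔ hm s w v = 0 := by
  constructor <;> intro h
  · have h2 := hm_conj hcard hadd v w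
    rw [h, zero_pow (by omega : s ≠ 0)] at h2
    exact h2.symm
  · have h2 := hm_conj hcard hadd w v
    rw [h, zero_pow (by omega : s ≠ 0)] at h2
    exact h2.symm

include hadd in
lemma hm_param (u : F) (a b : Fin 3 → F) :
    hm s (u • a + b) (u • a + b)
      = u ^ s * u * hm s a a + u ^ s * hm s a b + u * hm s b a + hm s b b := by
  simp only [hm, Fin.sum_univ_three, Pi.add_apply, Pi.smul_apply, smul_eq_mul, hadd, mul_pow]
  ring

lemma param_ne_zero {a b : Fin 3 → F} (ha : a ≠ 0) (hb : ∀ c : F, b ≠ c • a) (u : F) :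
    u • a + b ≠ 0 := by
  intro h
  apply hb (-u)
  rw [eq_neg_of_add_eq_zero_right h, neg_smul]

lemma exists_adapted {w v₀ : Fin 3 → F} (hw : w ≠ 0) (hv₀ : v₀ ≠ 0) (h0 : dot w v₀ = 0) :
    ∃ b, dot w b = 0 ∧ (∀ c : F, b ≠ c • v₀) ∧
      (∀ v, dot w v = 0 → ∃ x y : F, v = x • v₀ + y • b) := by
  obtain ⟨a, b, hwa, hwb, ha, hb, hspan⟩ := exists_perp_basis hw
  obtain ⟨x, y, hxy⟩ := hspan v₀ h0
  by_cases hy : y = 0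
  · subst hy
    have hx : x ≠ 0 := by
      rintro rfl
      simp at hxy
      exact hv₀ hxy
    refine ⟨b, hwb, ?_, ?_⟩
    · intro c hc
      apply hb (c * x)
      rw [hc, hxy]
      simp [smul_smul]
    · intro v hv
      obtain ⟨α, β, hab⟩ := hspan v hv
      refine ⟨α / x, β, ?_⟩
      rw [hab, hxy]
      funext i
      simp only [Pi.add_apply, Pi.smul_apply, smul_eq_mul, Pi.zero_apply, add_zero]
      field_simp
      ring
  · refine ⟨a, hwa, ?_, ?_⟩
    · intro c hc
      rcases eq_or_ne c 0 with rfl | hc0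
      · simp at hc; exact ha hc
      · apply hb ((1 - c * x)/(c * y))
        have : a = c • v₀ := hc
        rw [hxy] at this
        funext i
        have h1 := congrFun this i
        simp only [Pi.add_apply, Pi.smul_apply, smul_eq_mul] at h1 ⊢
        rw [div_mul_eq_mul_div, eq_div_iff (mul_ne_zero hc0 hy)]
        linear_combination -h1
    · intro v hv
      obtain ⟨α, β, hab⟩ := hspan v hv
      refine ⟨β / y, α - β * x / y, ?_⟩
      rw [hab, hxy]
      funext i
      simp only [Pi.add_apply, Pi.smul_apply, smul_eq_mul]
      field_simp
      ring

def lineSet (ℓ : Projectivization F (Fin 3 → F)) : Set (Projectivization F (Fin 3 → F)) :=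
  {x | PGinc x ℓ}

instance : Finite (Projectivization F (Fin 3 → F)) := Quotient.finite _

lemma dot_add_right (w u v : Fin 3 → F) : dot w (u + v) = dot w u + dot w v := by
  simp [dot, Finset.sum_add_distrib, mul_add]

lemma line_eq {w v₀ b : Fin 3 → F} (hw : w ≠ 0) (hv₀ : v₀ ≠ 0) (h0 : dot w v₀ = 0)
    (hbw : dot w b = 0) (hb : ∀ c : F, b ≠ c • v₀)
    (hspan : ∀ v, dot w v = 0 → ∃ x y : F, v = x • v₀ + y • b) :
    lineSet (Projectivization.mk F w hw)
      = insert (Projectivization.mk F v₀ hv₀)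
          (Set.range fun u : F =>
            Projectivization.mk F (u • v₀ + b) (param_ne_zero hv₀ hb u)) := by
  ext x
  induction x using Projectivization.ind with
  | h v hv =>
    simp only [lineSet, Set.mem_setOf_eq, Set.mem_insert_iff, Set.mem_range]
    rw [inc_mk hv hw]
    constructor
    · intro hdot
      obtain ⟨α, β, hab⟩ := hspan v hdot
      rcases eq_or_ne β 0 with rfl | hβ
      · left
        have hα : α ≠ 0 := by
          rintro rfl; simp at hab; exact hv hab
        rw [Projectivization.mk_eq_mk_iff]
        exact ⟨Units.mk0 α hα, by rw [Units.smul_def, Units.val_mk0, hab]; simp⟩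
      · right
        refine ⟨α / β, ?_⟩
        rw [Projectivization.mk_eq_mk_iff]
        refine ⟨(Units.mk0 β hβ)⁻¹, ?_⟩
        have hcast : ((Units.mk0 β hβ)⁻¹ : Fˣ) • v = (β⁻¹ : F) • v := by
          rw [Units.smul_def]
          norm_num
        rw [hcast, hab, smul_add, smul_smul, smul_smul, inv_mul_cancel₀ hβ, one_smul]
        congr 1
        rw [div_eq_inv_mul]
    · intro h
      rcases h with h | ⟨u, h⟩
      · rw [Projectivization.mk_eq_mk_iff] at h
        obtain ⟨α, hα⟩ := h
        rw [Units.smul_def] at hα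
        rw [← hα, dot_smul_right, h0, mul_zero]
      · rw [eq_comm, Projectivization.mk_eq_mk_iff] at h
        obtain ⟨α, hα⟩ := h
        rw [Units.smul_def] at hα
        rw [← hα, dot_smul_right, dot_add_right, dot_smul_right, h0, hbw]
        ring

lemma line_param_inj {v₀ b : Fin 3 → F} (hv₀ : v₀ ≠ 0) (hb : ∀ c : F, b ≠ c • v₀) :
    Function.Injective (fun u : F =>
      Projectivization.mk F (u • v₀ + b) (param_ne_zero hv₀ hb u)) := by
  intro u u' h
  simp only at h
  rw [Projectivization.mk_eq_mk_iff] at h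
  obtain ⟨α, hα⟩ := h
  rw [Units.smul_def, smul_add, smul_smul] at hα
  have h1 : ((α : F) - 1) • b = (u - (α : F) * u') • v₀ := by
    have := congrArg (fun z => z - ((α:F) • b) - (u • v₀)) hα
    funext i
    have h2 := congrFun this i
    simp only [Pi.add_apply, Pi.smul_apply, Pi.sub_apply, smul_eq_mul, sub_smul, one_smul] at h2 ⊢
    linear_combination h2
  rcases eq_or_ne ((α : F)) 1 with hα1 | hα1
  · rw [hα1] at hα
    simp only [one_mul, one_smul] at hα
    have h2 := add_right_cancel hα
    have h3 : (u' - u) • v₀ = 0 := by rw [sub_smul, h2, sub_self]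
    rcases smul_eq_zero.mp h3 with h4 | h4
    · have := sub_eq_zero.mp h4
      exact this.symm
    · exact absurd h4 hv₀
  · exfalso
    apply hb ((u - (α : F) * u') / ((α : F) - 1))
    have hne : (α : F) - 1 ≠ 0 := sub_ne_zero_of_ne hα1
    funext i
    have h2 := congrFun h1 i
    simp only [Pi.smul_apply, smul_eq_mul] at h2 ⊢
    rw [div_mul_eq_mul_div, eq_div_iff hne]
    linear_combination h2

lemma mk_not_in_range {v₀ b : Fin 3 → F} (hv₀ : v₀ ≠ 0) (hb : ∀ c : F, b ≠ c • v₀) :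
    Projectivization.mk F v₀ hv₀ ∉ Set.range (fun u : F =>
      Projectivization.mk F (u • v₀ + b) (param_ne_zero hv₀ hb u)) := by
  rintro ⟨u, hu⟩
  simp only at hu
  rw [Projectivization.mk_eq_mk_iff] at hu
  obtain ⟨α, hα⟩ := hu
  rw [Units.smul_def] at hα
  apply hb ((α : F) - u)
  funext i
  have h2 := congrFun hα i
  simp only [Pi.add_apply, Pi.smul_apply, smul_eq_mul, sub_smul] at h2 ⊢
  linear_combination -h2

lemma line_ncard {w : Fin 3 → F} (hw : w ≠ 0) :
    (lineSet (Projectivization.mk F w hw)).ncard = Fintype.card F + 1 := by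
  obtain ⟨a, b, hwa, hwb, ha, hb, hspan⟩ := exists_perp_basis hw
  rw [line_eq hw ha hwa hwb hb hspan]
  rw [Set.ncard_insert_of_notMem (mk_not_in_range ha hb) (Set.toFinite _)]
  rw [← Set.image_univ, Set.ncard_image_of_injective _ (line_param_inj ha hb),
    Set.ncard_univ, Nat.card_eq_fintype_card]

lemma mem_HS {x : Projectivization F (Fin 3 → F)} :
    x ∈ HermitianCurve F s ↔ hm s x.rep x.rep = 0 := by
  unfold HermitianCurve hm
  simp only [Set.mem_setOf_eq]
  constructor <;> intro h <;> rw [← h] <;>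
    exact Finset.sum_congr rfl fun i _ => by rw [pow_succ]

lemma pole_rep (hs : s ≠ 0) (x : Projectivization F (Fin 3 → F)) :
    ∃ c : F, c ≠ 0 ∧ (PGpole s x).rep = c • conj s x.rep := by
  have h1 : PGpole s x = Projectivization.mk F (conj s x.rep) (conj_ne_zero s x.rep_nonzero) := by
    conv_lhs => rw [← Projectivization.mk_rep x]
    exact pole_mk s hs x.rep_nonzero
  rw [h1]
  exact exists_rep_smul _ _

include hs2 hcard hadd in
lemma inc_pole_iff {x y : Projectivization F (Fin 3 → F)} :
    PGinc x (PGpole s y) ↔ hm s y.rep x.rep = 0 := by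
  obtain ⟨c, hc0, hc⟩ := pole_rep (by omega : s ≠ 0) y
  unfold PGinc
  rw [show (∑ i : Fin 3, (PGpole s y).rep i * x.rep i)
      = dot (PGpole s y).rep x.rep from rfl, hc, dot_smul, ← hm_eq_dot]
  constructor
  · intro h
    rcases mul_eq_zero.mp h with h | h
    · exact absurd h hc0
    · exact h
  · intro h; rw [h, mul_zero]

include hs2 hcard hadd in
lemma inc_pole_symm {x y : Projectivization F (Fin 3 → F)} :
    PGinc x (PGpole s y) ↔ PGinc y (PGpole s x) := by
  rw [inc_pole_iff hs2 hcard hadd, inc_pole_iff hs2 hcard hadd]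
  exact hm_zero_iff hs2 hcard hadd _ _

include hs2 hcard hadd in
lemma mem_HS_iff_inc_pole {x : Projectivization F (Fin 3 → F)} :
    x ∈ HermitianCurve F s ↔ PGinc x (PGpole s x) := by
  rw [inc_pole_iff hs2 hcard hadd, mem_HS]

include hcard in
lemma pole_pole (x : Projectivization F (Fin 3 → F)) (hs : s ≠ 0) :
    PGpole s (PGpole s x) = x := by
  obtain ⟨c, hc0, hc⟩ := pole_rep hs x
  have h1 : PGpole s (PGpole s x)
      = Projectivization.mk F (conj s (PGpole s x).rep)
          (conj_ne_zero s (PGpole s x).rep_nonzero) := by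
    conv_lhs => rw [← Projectivization.mk_rep (PGpole s x)]
    exact pole_mk s hs (PGpole s x).rep_nonzero
  rw [h1]
  conv_rhs => rw [← Projectivization.mk_rep x]
  rw [Projectivization.mk_eq_mk_iff]
  refine ⟨Units.mk0 (c ^ s) (pow_ne_zero _ hc0), ?_⟩
  rw [Units.smul_def, Units.val_mk0]
  funext i
  rw [hc]
  simp only [conj, Pi.smul_apply, smul_eq_mul, mul_pow]
  rw [← pow_mul, ← hcard, FiniteField.pow_card]

include hcard in
lemma pole_inj (hs : s ≠ 0) : Function.Injective (PGpole s :
    Projectivization F (Fin 3 → F) → Projectivization F (Fin 3 → F)) := by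
  intro x y h
  have := congrArg (PGpole s) h
  rwa [pole_pole hcard x hs, pole_pole hcard y hs] at this

include hs2 hcard hadd in
lemma no_isotropic {a b : Fin 3 → F} (ha : a ≠ 0) (hb : ∀ c : F, b ≠ c • a)
    (haa : hm s a a = 0) (hab : hm s a b = 0) (hba : hm s b a = 0) (hbb : hm s b b = 0) :
    False := by
  have hb0 : b ≠ 0 := by
    intro h
    exact hb 0 (by rw [h, zero_smul])
  have hca := conj_ne_zero s ha
  have hcb := conj_ne_zero s hb0
  obtain ⟨c1, hc1⟩ := perp_mem_span ha hb
    (by rw [dot_comm, ← hm_eq_dot]; exact haa) (by rw [dot_comm, ← hm_eq_dot]; exact hab)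
  obtain ⟨c2, hc2⟩ := perp_mem_span ha hb
    (by rw [dot_comm, ← hm_eq_dot]; exact hba) (by rw [dot_comm, ← hm_eq_dot]; exact hbb)
  have hc10 : c1 ≠ 0 := by rintro rfl; rw [zero_smul] at hc1; exact hca hc1
  have hc20 : c2 ≠ 0 := by rintro rfl; rw [zero_smul] at hc2; exact hcb hc2
  -- conj b = (c2/c1) • conj a
  have key : conj s b = (c2 / c1) • conj s a := by
    rw [hc1, hc2, smul_smul]
    congr 1
    field_simp
  -- surjectivity of s-power
  have hsurj : Function.Surjective (fun x : F => x ^ s) := by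
    have hinj : Function.Injective (fun x : F => x ^ s) := fun x y h =>
      pow_s_inj hs2 hadd h
    exact Finite.surjective_of_injective hinj
  obtain ⟨e, he⟩ := hsurj (c2 / c1)
  apply hb e
  funext i
  have h2 := congrFun key i
  simp only [conj, Pi.smul_apply, smul_eq_mul] at h2 ⊢
  apply pow_s_inj hs2 hadd
  rw [h2, ← he, mul_pow]

lemma inc_rep {w : Fin 3 → F} (hw : w ≠ 0) (x : Projectivization F (Fin 3 → F)) :
    PGinc x (Projectivization.mk F w hw) ↔ dot w x.rep = 0 := by
  conv_lhs => rw [← Projectivization.mk_rep x]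
  exact inc_mk x.rep_nonzero hw

include hs2 hcard hadd in
lemma herm_param_mem {v₀ b : Fin 3 → F} (hv₀ : v₀ ≠ 0) (hb : ∀ c : F, b ≠ c • v₀)
    (hherm : hm s v₀ v₀ = 0) (u : F) :
    Projectivization.mk F (u • v₀ + b) (param_ne_zero hv₀ hb u) ∈ HermitianCurve F s
      ↔ hm s v₀ b * u ^ s + (hm s v₀ b) ^ s * u + hm s b b = 0 := by
  rw [herm_mk, hm_param hadd, hherm, hm_conj hcard hadd v₀ b]
  constructor <;> intro h <;> linear_combination h

include hs2 hcard hadd in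
lemma herm_line_secant {w v₀ b : Fin 3 → F} (hw : w ≠ 0) (hv₀ : v₀ ≠ 0)
    (h0 : dot w v₀ = 0) (hbw : dot w b = 0) (hb : ∀ c : F, b ≠ c • v₀)
    (hspan : ∀ v, dot w v = 0 → ∃ x y : F, v = x • v₀ + y • b)
    (hherm : hm s v₀ v₀ = 0) (hc : hm s v₀ b ≠ 0) :
    (HermitianCurve F s ∩ lineSet (Projectivization.mk F w hw)).ncard = s + 1 := by
  have hset : HermitianCurve F s ∩ lineSet (Projectivization.mk F w hw)
      = insert (Projectivization.mk F v₀ hv₀)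
          ((fun u : F => Projectivization.mk F (u • v₀ + b) (param_ne_zero hv₀ hb u)) ''
            {u : F | hm s v₀ b * u ^ s + (hm s v₀ b) ^ s * u + hm s b b = 0}) := by
    rw [line_eq hw hv₀ h0 hbw hb hspan]
    ext x
    simp only [Set.mem_inter_iff, Set.mem_insert_iff, Set.mem_range, Set.mem_image,
      Set.mem_setOf_eq]
    constructor
    · rintro ⟨hxH, hx | ⟨u, hu⟩⟩
      · exact Or.inl hx
      · right
        refine ⟨u, ?_, hu⟩
        rw [← herm_param_mem hs2 hcard hadd hv₀ hb hherm u, hu]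
        exact hxH
    · rintro (hx | ⟨u, hu, hux⟩)
      · subst hx
        exact ⟨(herm_mk s hv₀).mpr hherm, Or.inl rfl⟩
      · refine ⟨?_, Or.inr ⟨u, hux⟩⟩
        rw [← hux]
        exact (herm_param_mem hs2 hcard hadd hv₀ hb hherm u).mpr hu
  rw [hset]
  have hnotmem : Projectivization.mk F v₀ hv₀ ∉
      ((fun u : F => Projectivization.mk F (u • v₀ + b) (param_ne_zero hv₀ hb u)) ''
        {u : F | hm s v₀ b * u ^ s + (hm s v₀ b) ^ s * u + hm s b b = 0}) := by
    intro hmem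
    apply mk_not_in_range hv₀ hb
    obtain ⟨u, _, hu⟩ := hmem
    exact ⟨u, hu⟩
  rw [Set.ncard_insert_of_notMem hnotmem (Set.toFinite _)]
  rw [Set.ncard_image_of_injective _ (line_param_inj hv₀ hb)]
  rw [sol_count hs2 hcard hadd hc (by rw [hm_conj hcard hadd b b])]

include hs2 hcard hadd in
lemma herm_line_tangent {w v₀ b : Fin 3 → F} (hw : w ≠ 0) (hv₀ : v₀ ≠ 0)
    (h0 : dot w v₀ = 0) (hbw : dot w b = 0) (hb : ∀ c : F, b ≠ c • v₀)
    (hspan : ∀ v, dot w v = 0 → ∃ x y : F, v = x • v₀ + y • b)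
    (hherm : hm s v₀ v₀ = 0) (hc : hm s v₀ b = 0) :
    HermitianCurve F s ∩ lineSet (Projectivization.mk F w hw)
        = {Projectivization.mk F v₀ hv₀} ∧
      Projectivization.mk F w hw = PGpole s (Projectivization.mk F v₀ hv₀) := by
  have hd : hm s b b ≠ 0 := by
    intro hd0
    exact no_isotropic hs2 hcard hadd hv₀ hb hherm hc
      (by rw [← (hm_zero_iff hs2 hcard hadd v₀ b)]; exact hc) hd0
  constructor
  · rw [line_eq hw hv₀ h0 hbw hb hspan]
    ext x
    simp only [Set.mem_inter_iff, Set.mem_insert_iff, Set.mem_range, Set.mem_singleton_iff]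
    constructor
    · rintro ⟨hxH, hx | ⟨u, hu⟩⟩
      · exact hx
      · exfalso
        rw [← hu] at hxH
        rw [herm_param_mem hs2 hcard hadd hv₀ hb hherm u, hc] at hxH
        simp only [zero_mul, zero_add] at hxH
        rw [zero_pow (by omega : s ≠ 0), zero_mul, zero_add] at hxH
        exact hd hxH
    · rintro rfl
      exact ⟨(herm_mk s hv₀).mpr hherm, Or.inl rfl⟩
  · rw [pole_mk s (by omega : s ≠ 0) hv₀, Projectivization.mk_eq_mk_iff]
    have h1 : dot v₀ w = 0 := by rw [dot_comm]; exact h0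
    have h2 : dot b w = 0 := by rw [dot_comm]; exact hbw
    have h3 : dot v₀ (conj s v₀) = 0 := by rw [dot_comm, ← hm_eq_dot]; exact hherm
    have h4 : dot b (conj s v₀) = 0 := by rw [dot_comm, ← hm_eq_dot]; exact hc
    obtain ⟨cc, hcc⟩ := perp_unique hv₀ hb hw h1 h2 h3 h4
    have hcc0 : cc ≠ 0 := by
      rintro rfl
      rw [zero_smul] at hcc
      exact conj_ne_zero s hv₀ hcc
    exact ⟨(Units.mk0 cc hcc0)⁻¹, by
      rw [Units.smul_def]
      have : ((Units.mk0 cc hcc0)⁻¹ : Fˣ) = Units.mk0 cc⁻¹ (inv_ne_zero hcc0) := by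
        ext; norm_num
      rw [this, Units.val_mk0, hcc, smul_smul, inv_mul_cancel₀ hcc0, one_smul]⟩

include hs2 hcard hadd in
lemma exists_H_on_line (ℓ : Projectivization F (Fin 3 → F)) :
    ∃ z ∈ HermitianCurve F s, PGinc z ℓ := by
  induction ℓ using Projectivization.ind with
  | h w hw =>
    obtain ⟨a, b, hwa, hwb, ha, hb, hspan⟩ := exists_perp_basis hw
    rcases eq_or_ne (hm s a a) 0 with he | he
    · exact ⟨Projectivization.mk F a ha, (herm_mk s ha).mpr he,
        (inc_mk ha hw).mpr hwa⟩
    · obtain ⟨u, hu⟩ := exists_root_special hs2 hcard hadd he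
        (by rw [hm_conj hcard hadd a a]) (by rw [hm_conj hcard hadd b b])
        (c := hm s a b)
      refine ⟨Projectivization.mk F (u • a + b) (param_ne_zero ha hb u), ?_, ?_⟩
      · rw [herm_mk, hm_param hadd, ← hm_conj hcard hadd a b]
        rw [pow_succ] at hu
        linear_combination hu
      · rw [inc_mk (param_ne_zero ha hb u) hw, dot_add_right, dot_smul_right, hwa, hwb]
        ring

include hs2 hcard hadd in
lemma line_dichotomy (ℓ : Projectivization F (Fin 3 → F)) :
    (∃ z ∈ HermitianCurve F s, ℓ = PGpole s z ∧
        HermitianCurve F s ∩ lineSet ℓ = {z}) ∨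
      (HermitianCurve F s ∩ lineSet ℓ).ncard = s + 1 := by
  induction ℓ using Projectivization.ind with
  | h w hw =>
    obtain ⟨z, hzH, hzinc⟩ := exists_H_on_line hs2 hcard hadd (Projectivization.mk F w hw)
    have h0 : dot w z.rep = 0 := (inc_rep hw z).mp hzinc
    obtain ⟨b, hbw, hb, hspan⟩ := exists_adapted hw z.rep_nonzero h0
    have hherm : hm s z.rep z.rep = 0 := mem_HS.mp hzH
    rcases eq_or_ne (hm s z.rep b) 0 with hc | hc
    · left
      obtain ⟨hset, hpole⟩ := herm_line_tangent hs2 hcard hadd hw z.rep_nonzero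
        h0 hbw hb hspan hherm hc
      refine ⟨z, hzH, ?_, ?_⟩
      · rw [hpole]
        congr 1
        exact Projectivization.mk_rep z
      · rw [hset]
        congr 1
        exact Projectivization.mk_rep z
    · right
      exact herm_line_secant hs2 hcard hadd hw z.rep_nonzero h0 hbw hb hspan hherm hc

include hs2 hcard hadd in
lemma tangent_inter {z : Projectivization F (Fin 3 → F)} (hz : z ∈ HermitianCurve F s) :
    HermitianCurve F s ∩ lineSet (PGpole s z) = {z} := by
  have hherm : hm s z.rep z.rep = 0 := mem_HS.mp hz
  have hw : conj s z.rep ≠ 0 := conj_ne_zero s z.rep_nonzero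
  have hpole : PGpole s z = Projectivization.mk F (conj s z.rep) hw := by
    conv_lhs => rw [← Projectivization.mk_rep z]
    exact pole_mk s (by omega : s ≠ 0) z.rep_nonzero
  have h0 : dot (conj s z.rep) z.rep = 0 := by rw [← hm_eq_dot]; exact hherm
  obtain ⟨b, hbw, hb, hspan⟩ := exists_adapted hw z.rep_nonzero h0
  have hc : hm s z.rep b = 0 := by rw [hm_eq_dot]; exact hbw
  obtain ⟨hset, _⟩ := herm_line_tangent hs2 hcard hadd hw z.rep_nonzero h0 hbw hb hspan hherm hc
  rw [hpole, hset]
  congr 1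
  exact Projectivization.mk_rep z

lemma proj_nonprop {x y : Projectivization F (Fin 3 → F)} (hxy : x ≠ y) :
    ∀ c : F, y.rep ≠ c • x.rep := by
  intro c hc
  apply hxy
  have hc0 : c ≠ 0 := by
    rintro rfl
    rw [zero_smul] at hc
    exact y.rep_nonzero hc
  rw [← Projectivization.mk_rep x, ← Projectivization.mk_rep y,
    Projectivization.mk_eq_mk_iff]
  refine ⟨(Units.mk0 c hc0)⁻¹, ?_⟩
  rw [Units.smul_def, hc, smul_smul]
  have : ((Units.mk0 c hc0)⁻¹ : Fˣ) = Units.mk0 c⁻¹ (inv_ne_zero hc0) := by ext; norm_num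
  rw [this, Units.val_mk0, inv_mul_cancel₀ hc0, one_smul]

lemma inc_dot {x ℓ : Projectivization F (Fin 3 → F)} :
    PGinc x ℓ ↔ dot ℓ.rep x.rep = 0 := Iff.rfl

lemma unique_line {x y ℓ m : Projectivization F (Fin 3 → F)} (hxy : x ≠ y)
    (hxℓ : PGinc x ℓ) (hyℓ : PGinc y ℓ) (hxm : PGinc x m) (hym : PGinc y m) : ℓ = m := by
  have h1 : dot x.rep ℓ.rep = 0 := by rw [dot_comm]; exact hxℓ
  have h2 : dot y.rep ℓ.rep = 0 := by rw [dot_comm]; exact hyℓ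
  have h3 : dot x.rep m.rep = 0 := by rw [dot_comm]; exact hxm
  have h4 : dot y.rep m.rep = 0 := by rw [dot_comm]; exact hym
  obtain ⟨c, hc⟩ := perp_unique x.rep_nonzero (proj_nonprop hxy) ℓ.rep_nonzero h1 h2 h3 h4
  have hc0 : c ≠ 0 := by
    rintro rfl
    rw [zero_smul] at hc
    exact m.rep_nonzero hc
  rw [← Projectivization.mk_rep ℓ, ← Projectivization.mk_rep m,
    Projectivization.mk_eq_mk_iff]
  refine ⟨(Units.mk0 c hc0)⁻¹, ?_⟩
  rw [Units.smul_def, hc, smul_smul]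
  have : ((Units.mk0 c hc0)⁻¹ : Fˣ) = Units.mk0 c⁻¹ (inv_ne_zero hc0) := by ext; norm_num
  rw [this, Units.val_mk0, inv_mul_cancel₀ hc0, one_smul]

lemma meet_unique {x y ℓ m : Projectivization F (Fin 3 → F)} (hlm : ℓ ≠ m)
    (hxℓ : PGinc x ℓ) (hxm : PGinc x m) (hyℓ : PGinc y ℓ) (hym : PGinc y m) : x = y := by
  by_contra hxy
  exact hlm (unique_line hxy hxℓ hyℓ hxm hym)

lemma exists_meet (ℓ m : Projectivization F (Fin 3 → F)) (hlm : ℓ ≠ m) :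
    ∃ x, PGinc x ℓ ∧ PGinc x m := by
  have hcr : cross ℓ.rep m.rep ≠ 0 :=
    cross_ne_zero ℓ.rep_nonzero (proj_nonprop hlm)
  refine ⟨Projectivization.mk F (cross ℓ.rep m.rep) hcr, ?_, ?_⟩
  · rw [inc_dot, dot_comm]
    obtain ⟨c, hc0, hc⟩ := exists_rep_smul (cross ℓ.rep m.rep) hcr
    rw [hc, dot_smul]
    rw [dot_cross_left _ _, mul_zero]
  · rw [inc_dot, dot_comm]
    obtain ⟨c, hc0, hc⟩ := exists_rep_smul (cross ℓ.rep m.rep) hcr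
    rw [hc, dot_smul]
    rw [dot_cross_right _ _, mul_zero]

lemma ncard_biUnion_of_disjoint {α β : Type*} {T : Set α} (hT : T.Finite)
    {f : α → Set β} {k : ℕ} (hfin0 : ∀ a ∈ T, (f a).Finite)
    (hdisj0 : ∀ a ∈ T, ∀ b ∈ T, a ≠ b → Disjoint (f a) (f b))
    (hsize0 : ∀ a ∈ T, (f a).ncard = k) :
    (⋃ a ∈ T, f a).ncard = T.ncard * k := by
  revert hfin0 hdisj0 hsize0
  refine Set.Finite.induction_on (motive := fun S _ => (∀ a ∈ S, (f a).Finite) →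
    (∀ a ∈ S, ∀ b ∈ S, a ≠ b → Disjoint (f a) (f b)) →
    (∀ a ∈ S, (f a).ncard = k) → (⋃ a ∈ S, f a).ncard = S.ncard * k) _ hT ?_ ?_
  · intro _ _ _
    simp
  · intro a T' haT' hT' ih hfin hdisj hsize
    rw [Set.biUnion_insert]
    have hdisj2 : Disjoint (f a) (⋃ b ∈ T', f b) := by
      rw [Set.disjoint_right]
      intro x hx hxa
      simp only [Set.mem_iUnion, exists_prop] at hx
      obtain ⟨b, hb, hxb⟩ := hx
      have hne : a ≠ b := by rintro rfl; exact haT' hb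
      exact (hdisj a (Set.mem_insert _ _) b (Set.mem_insert_of_mem _ hb) hne).le_bot
        ⟨hxa, hxb⟩ |>.elim
    have hfinU : (⋃ b ∈ T', f b).Finite :=
      Set.Finite.biUnion hT' (fun b hb => hfin b (Set.mem_insert_of_mem _ hb))
    rw [Set.ncard_union_eq hdisj2 (hfin a (Set.mem_insert _ _)) hfinU]
    rw [ih (fun b hb => hfin b (Set.mem_insert_of_mem _ hb))
      (fun b hb c hc => hdisj b (Set.mem_insert_of_mem _ hb) c (Set.mem_insert_of_mem _ hc))
      (fun b hb => hsize b (Set.mem_insert_of_mem _ hb))]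
    rw [Set.ncard_insert_of_notMem haT' hT', hsize a (Set.mem_insert _ _)]
    ring

include hs2 hcard hadd in
lemma H_ncard {P L : Projectivization F (Fin 3 → F)} (hP : P ∈ HermitianCurve F s)
    (hPL : PGinc P L) (hHL : HermitianCurve F s ∩ lineSet L = {P}) :
    (HermitianCurve F s).ncard = s * s * s + 1 := by
  classical
  have hLpole : L = PGpole s P := by
    rcases line_dichotomy hs2 hcard hadd L with ⟨z, hz, hzeq, hzset⟩ | hcnt
    · rw [hHL] at hzset
      have hPz : P = z := Set.singleton_eq_singleton_iff.mp hzset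
      rw [hzeq, hPz]
    · rw [hHL, Set.ncard_singleton] at hcnt
      omega
  set T : Set (Projectivization F (Fin 3 → F)) := lineSet P \ {L} with hT
  have hTcard : T.ncard = s * s := by
    have h1 : (lineSet P).ncard = Fintype.card F + 1 := by
      conv_lhs => rw [← Projectivization.mk_rep P]
      exact line_ncard P.rep_nonzero
    have hLmem : L ∈ lineSet P := (inc_symm P L).mp hPL
    rw [hT, Set.ncard_diff_singleton_of_mem hLmem, h1, hcard]
    omega
  have hHeq : HermitianCurve F s
      = insert P (⋃ ℓ ∈ T, (HermitianCurve F s ∩ lineSet ℓ) \ {P}) := by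
    ext x
    simp only [Set.mem_insert_iff, Set.mem_iUnion, exists_prop, Set.mem_diff,
      Set.mem_inter_iff, Set.mem_singleton_iff]
    constructor
    · intro hx
      rcases eq_or_ne x P with rfl | hxP
      · exact Or.inl rfl
      · right
        have hcr : cross P.rep x.rep ≠ 0 :=
          cross_ne_zero P.rep_nonzero (proj_nonprop (Ne.symm hxP))
        set ℓx := Projectivization.mk F (cross P.rep x.rep) hcr with hℓx
        have hPx : PGinc P ℓx := by
          rw [hℓx, inc_rep hcr P]
          exact dot_cross_left _ _
        have hxx : PGinc x ℓx := by
          rw [hℓx, inc_rep hcr x]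
          exact dot_cross_right _ _
        have hℓxL : ℓx ≠ L := by
          intro h
          apply hxP
          have : x ∈ HermitianCurve F s ∩ lineSet L := ⟨hx, by rw [← h]; exact hxx⟩
          rw [hHL] at this
          exact this
        refine ⟨ℓx, ⟨(inc_symm P ℓx).mp hPx, ?_⟩, ⟨hx, hxx⟩, hxP⟩
        simpa using hℓxL
    · rintro (rfl | ⟨ℓ, hℓ, ⟨hxH, _⟩, _⟩)
      · exact hP
      · exact hxH
  rw [hHeq]
  have hPnotin : P ∉ ⋃ ℓ ∈ T, (HermitianCurve F s ∩ lineSet ℓ) \ {P} := by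
    intro hmem
    simp only [Set.mem_iUnion, exists_prop, Set.mem_diff, Set.mem_singleton_iff] at hmem
    obtain ⟨ℓ, _, _, hne⟩ := hmem
    exact hne trivial
  rw [Set.ncard_insert_of_notMem hPnotin (Set.Finite.biUnion (Set.toFinite _)
    (fun _ _ => Set.toFinite _))]
  have hsize : ∀ ℓ ∈ T, ((HermitianCurve F s ∩ lineSet ℓ) \ {P}).ncard = s := by
    intro ℓ hℓ
    obtain ⟨hℓP, hℓL⟩ := hℓ
    have hℓL' : ℓ ≠ L := by simpa using hℓL
    have hPinℓ : P ∈ HermitianCurve F s ∩ lineSet ℓ := ⟨hP, (inc_symm ℓ P).mp hℓP⟩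
    have hcnt : (HermitianCurve F s ∩ lineSet ℓ).ncard = s + 1 := by
      rcases line_dichotomy hs2 hcard hadd ℓ with ⟨z, hz, hzeq, hzset⟩ | hcnt
      · exfalso
        apply hℓL'
        rw [hzset] at hPinℓ
        rw [Set.mem_singleton_iff] at hPinℓ
        rw [hLpole, hzeq, ← hPinℓ]
      · exact hcnt
    rw [Set.ncard_diff_singleton_of_mem hPinℓ, hcnt]
    omega
  have hdisj : ∀ ℓ ∈ T, ∀ m ∈ T, ℓ ≠ m →
      Disjoint ((HermitianCurve F s ∩ lineSet ℓ) \ {P})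
        ((HermitianCurve F s ∩ lineSet m) \ {P}) := by
    intro ℓ hℓ m hm hne
    rw [Set.disjoint_left]
    rintro x ⟨⟨_, hxℓ⟩, hxP⟩ ⟨⟨_, hxm⟩, _⟩
    apply hxP
    rw [Set.mem_singleton_iff] at hxP ⊢
    exact meet_unique hne hxℓ hxm ((inc_symm ℓ P).mp hℓ.1) ((inc_symm m P).mp hm.1)
  rw [ncard_biUnion_of_disjoint (Set.toFinite _) (fun _ _ => Set.toFinite _) hdisj hsize,
    hTcard]

section construction
variable {n : ℕ} {P L : Projectivization F (Fin 3 → F)} {ι : Fin n → Projectivization F (Fin 3 → F)}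

/-- The blocking set. -/
def BB (s : ℕ) (ι : Fin n → Projectivization F (Fin 3 → F)) : Set (Projectivization F (Fin 3 → F)) :=
  HermitianCurve F s ∪ (⋃ i, lineSet (ι i)) ∪ Set.range (fun i => PGpole s (ι i))

variable (hP : P ∈ HermitianCurve F s) (hPL : PGinc P L)
  (hHL : HermitianCurve F s ∩ lineSet L = {P})
  (hinj : Function.Injective ι) (hιP : ∀ i, PGinc P (ι i)) (hιL : ∀ i, ι i ≠ L)
  (hsec : ∀ i, (HermitianCurve F s ∩ lineSet (ι i)).ncard = s + 1)

include hs2 hcard hadd hP hPL hHL in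
lemma L_is_pole : L = PGpole s P := by
  rcases line_dichotomy hs2 hcard hadd L with ⟨z, hz, hzeq, hzset⟩ | hcnt
  · rw [hHL] at hzset
    rw [hzeq, Set.singleton_eq_singleton_iff.mp hzset]
  · rw [hHL, Set.ncard_singleton] at hcnt
    omega

include hs2 hcard hadd hsec in
lemma iota_not_tangent (i : Fin n) {z : Projectivization F (Fin 3 → F)}
    (hz : z ∈ HermitianCurve F s) : ι i ≠ PGpole s z := by
  intro h
  have h1 := tangent_inter hs2 hcard hadd hz
  rw [← h] at h1
  have := hsec i
  rw [h1, Set.ncard_singleton] at this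
  omega

include hs2 hcard hadd hsec in
lemma pole_not_in_H (i : Fin n) : PGpole s (ι i) ∉ HermitianCurve F s := by
  intro h
  exact iota_not_tangent hs2 hcard hadd hsec i h
    (by rw [pole_pole hcard (ι i) (by omega : s ≠ 0)])

include hs2 hcard hadd hP hPL hHL hιP in
lemma pole_on_L (i : Fin n) : PGinc (PGpole s (ι i)) L := by
  rw [L_is_pole hs2 hcard hadd hP hPL hHL, inc_pole_symm hs2 hcard hadd,
    pole_pole hcard (ι i) (by omega : s ≠ 0)]
  exact hιP i

include hs2 hcard hadd hP hPL hHL hιL in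
lemma pole_ne_P (i : Fin n) : PGpole s (ι i) ≠ P := by
  intro h
  apply hιL i
  have := congrArg (PGpole s) h
  rw [pole_pole hcard (ι i) (by omega : s ≠ 0)] at this
  rw [this, L_is_pole hs2 hcard hadd hP hPL hHL]

include hs2 hcard hadd hP hPL hHL hιP hιL in
lemma pole_not_on_iota (i j : Fin n) : ¬ PGinc (PGpole s (ι i)) (ι j) := by
  intro h
  apply pole_ne_P hs2 hcard hadd hP hPL hHL hιL i
  exact meet_unique (hιL j) h (pole_on_L hs2 hcard hadd hP hPL hHL hιP i) (hιP j) hPL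

include hinj in
lemma iota_ne (i j : Fin n) (hij : i ≠ j) : ι i ≠ ι j := fun h => hij (hinj h)

include hs2 hcard hadd hP hPL hHL hinj hιP hιL in
lemma Lcount_set : BB s ι ∩ lineSet L = insert P (Set.range fun i => PGpole s (ι i)) := by
  ext x
  simp only [BB, Set.mem_inter_iff, Set.mem_union, Set.mem_iUnion, Set.mem_range,
    Set.mem_insert_iff]
  constructor
  · rintro ⟨(hx | hx) | hx, hxL⟩
    · left
      have : x ∈ HermitianCurve F s ∩ lineSet L := ⟨hx, hxL⟩
      rw [hHL] at this
      exact this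
    · obtain ⟨i, hxi⟩ := hx
      left
      exact meet_unique (hιL i) hxi hxL (hιP i) hPL
    · right; exact hx
  · rintro (rfl | ⟨i, rfl⟩)
    · exact ⟨Or.inl (Or.inl hP), hPL⟩
    · exact ⟨Or.inr ⟨i, rfl⟩, pole_on_L hs2 hcard hadd hP hPL hHL hιP i⟩

include hs2 hcard hadd hP hPL hHL hinj hιP hιL in
lemma Lcount : (BB s ι ∩ lineSet L).ncard = n + 1 := by
  rw [Lcount_set hs2 hcard hadd hP hPL hHL hinj hιP hιL]
  have hnotmem : P ∉ Set.range fun i => PGpole s (ι i) := by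
    rintro ⟨i, hi⟩
    exact pole_ne_P hs2 hcard hadd hP hPL hHL hιL i hi
  rw [Set.ncard_insert_of_notMem hnotmem (Set.toFinite _), ← Set.image_univ,
    Set.ncard_image_of_injective _ (fun i j h => hinj (pole_inj hcard (by omega : s ≠ 0) h)),
    Set.ncard_univ, Nat.card_eq_fintype_card, Fintype.card_fin]

include hs2 hcard hadd hP hPL hHL hinj hιP hιL hsec in
lemma tancount {z : Projectivization F (Fin 3 → F)} (hz : z ∈ HermitianCurve F s)
    (hzP : z ≠ P) : (BB s ι ∩ lineSet (PGpole s z)).ncard = n + 1 := by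
  classical
  have hPnot : ¬ PGinc P (PGpole s z) := by
    intro h
    apply hzP
    rw [inc_pole_symm hs2 hcard hadd, ← L_is_pole hs2 hcard hadd hP hPL hHL] at h
    have : z ∈ HermitianCurve F s ∩ lineSet L := ⟨hz, h⟩
    rw [hHL] at this
    exact this
  have hne : ∀ i, PGpole s z ≠ ι i :=
    fun i h => iota_not_tangent hs2 hcard hadd hsec i hz h.symm
  set pt : Fin n → Projectivization F (Fin 3 → F) :=
    fun i => Classical.choose (exists_meet (PGpole s z) (ι i) (hne i)) with hptdef
  have hpt : ∀ i, PGinc (pt i) (PGpole s z) ∧ PGinc (pt i) (ι i) :=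
    fun i => Classical.choose_spec (exists_meet (PGpole s z) (ι i) (hne i))
  have hptP : ∀ i, pt i ≠ P := by
    intro i h
    have h2 := (hpt i).1
    rw [h] at h2
    exact hPnot h2
  have hptinj : Function.Injective pt := by
    intro i j hij
    by_contra hij'
    apply hptP i
    refine meet_unique (iota_ne hinj i j hij') (hpt i).2 ?_ (hιP i) (hιP j)
    rw [hij]
    exact (hpt j).2
  have hmeet_id : ∀ i x, PGinc x (PGpole s z) → PGinc x (ι i) → x = pt i := by
    intro i x h1 h2
    exact meet_unique (hne i) h1 h2 (hpt i).1 (hpt i).2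
  have hzinc : PGinc z (PGpole s z) := (mem_HS_iff_inc_pole hs2 hcard hadd).mp hz
  have hpole_inc : ∀ i, PGinc (PGpole s (ι i)) (PGpole s z) ↔ PGinc z (ι i) := by
    intro i
    rw [inc_pole_symm hs2 hcard hadd, pole_pole hcard (ι i) (by omega : s ≠ 0)]
  by_cases hcase : ∃ i, PGinc z (ι i)
  · obtain ⟨i₀, hi₀⟩ := hcase
    have hzpt : z = pt i₀ := hmeet_id i₀ z hzinc hi₀
    have hset : BB s ι ∩ lineSet (PGpole s z) = insert (PGpole s (ι i₀)) (Set.range pt) := by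
      ext x
      simp only [BB, Set.mem_inter_iff, Set.mem_union, Set.mem_iUnion, Set.mem_range,
        Set.mem_insert_iff]
      constructor
      · rintro ⟨(hx | hx) | hx, hxT⟩
        · right
          refine ⟨i₀, ?_⟩
          rw [← hzpt]
          have h3 : x ∈ HermitianCurve F s ∩ lineSet (PGpole s z) := ⟨hx, hxT⟩
          rw [tangent_inter hs2 hcard hadd hz] at h3
          exact (Set.mem_singleton_iff.mp h3).symm
        · obtain ⟨i, hxi⟩ := hx
          exact Or.inr ⟨i, (hmeet_id i x hxT hxi).symm⟩
        · obtain ⟨j, rfl⟩ := hx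
          left
          have hj : PGinc z (ι j) := (hpole_inc j).mp hxT
          have : j = i₀ := by
            by_contra hji
            exact hzP (meet_unique (iota_ne hinj j i₀ hji) hj hi₀ (hιP j) (hιP i₀))
          rw [this]
      · rintro (rfl | ⟨i, rfl⟩)
        · exact ⟨Or.inr ⟨i₀, rfl⟩, (hpole_inc i₀).mpr hi₀⟩
        · exact ⟨Or.inl (Or.inr ⟨i, (hpt i).2⟩), (hpt i).1⟩
    rw [hset]
    have hnotmem : PGpole s (ι i₀) ∉ Set.range pt := by
      rintro ⟨j, hj⟩
      apply pole_ne_P hs2 hcard hadd hP hPL hHL hιL i₀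
      refine meet_unique (hιL j) ?_ ?_ (hιP j) hPL
      · rw [← hj]; exact (hpt j).2
      · exact pole_on_L hs2 hcard hadd hP hPL hHL hιP i₀
    rw [Set.ncard_insert_of_notMem hnotmem (Set.toFinite _), ← Set.image_univ,
      Set.ncard_image_of_injective _ hptinj, Set.ncard_univ, Nat.card_eq_fintype_card,
      Fintype.card_fin]
  · push_neg at hcase
    have hset : BB s ι ∩ lineSet (PGpole s z) = insert z (Set.range pt) := by
      ext x
      simp only [BB, Set.mem_inter_iff, Set.mem_union, Set.mem_iUnion, Set.mem_range,
        Set.mem_insert_iff]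
      constructor
      · rintro ⟨(hx | hx) | hx, hxT⟩
        · left
          have h3 : x ∈ HermitianCurve F s ∩ lineSet (PGpole s z) := ⟨hx, hxT⟩
          rw [tangent_inter hs2 hcard hadd hz] at h3
          exact Set.mem_singleton_iff.mp h3
        · obtain ⟨i, hxi⟩ := hx
          exact Or.inr ⟨i, (hmeet_id i x hxT hxi).symm⟩
        · obtain ⟨j, rfl⟩ := hx
          exact absurd ((hpole_inc j).mp hxT) (hcase j)
      · rintro (rfl | ⟨i, rfl⟩)
        · exact ⟨Or.inl (Or.inl hz), hzinc⟩
        · exact ⟨Or.inl (Or.inr ⟨i, (hpt i).2⟩), (hpt i).1⟩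
    rw [hset]
    have hnotmem : z ∉ Set.range pt := by
      rintro ⟨j, hj⟩
      apply hcase j
      rw [← hj]
      exact (hpt j).2
    rw [Set.ncard_insert_of_notMem hnotmem (Set.toFinite _), ← Set.image_univ,
      Set.ncard_image_of_injective _ hptinj, Set.ncard_univ, Nat.card_eq_fintype_card,
      Fintype.card_fin]

include hs2 hcard hadd hP hPL hHL hinj hιP hιL hsec in
lemma BBcount : (BB s ι).ncard = s * s * s + 1 + n * ((s * s - s) + 1) := by
  classical
  have hHne : (HermitianCurve F s).ncard = s * s * s + 1 :=
    H_ncard hs2 hcard hadd hP hPL hHL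
  set U : Set (Projectivization F (Fin 3 → F)) :=
    ⋃ i, (lineSet (ι i) \ HermitianCurve F s) with hU
  set R : Set (Projectivization F (Fin 3 → F)) :=
    Set.range (fun i => PGpole s (ι i)) with hR
  have hBBeq : BB s ι = (HermitianCurve F s ∪ U) ∪ R := by
    ext x
    simp only [BB, hU, hR, Set.mem_union, Set.mem_iUnion, Set.mem_diff]
    constructor
    · rintro ((hx | hx) | hx)
      · exact Or.inl (Or.inl hx)
      · obtain ⟨i, hxi⟩ := hx
        by_cases hxH : x ∈ HermitianCurve F s
        · exact Or.inl (Or.inl hxH)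
        · exact Or.inl (Or.inr ⟨i, hxi, hxH⟩)
      · exact Or.inr hx
    · rintro ((hx | hx) | hx)
      · exact Or.inl (Or.inl hx)
      · obtain ⟨i, hxi, _⟩ := hx
        exact Or.inl (Or.inr ⟨i, hxi⟩)
      · exact Or.inr hx
  have hUncard : U.ncard = n * (s * s - s) := by
    have hUeq : U = ⋃ i ∈ (Set.univ : Set (Fin n)),
        (lineSet (ι i) \ HermitianCurve F s) := by
      rw [hU]
      ext x
      simp
    rw [hUeq, ncard_biUnion_of_disjoint (Set.toFinite _) (fun _ _ => Set.toFinite _)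
      ?disj ?size, Set.ncard_univ, Nat.card_eq_fintype_card, Fintype.card_fin]
    case disj =>
      intro i _ j _ hij
      rw [Set.disjoint_left]
      rintro x ⟨hxi, hxH⟩ ⟨hxj, _⟩
      apply hxH
      have hxP : x = P := meet_unique (iota_ne hinj i j hij) hxi hxj (hιP i) (hιP j)
      rw [hxP]
      exact hP
    case size =>
      intro i _
      have h1 : (lineSet (ι i)).ncard = s * s + 1 := by
        conv_lhs => rw [← Projectivization.mk_rep (ι i)]
        rw [line_ncard (ι i).rep_nonzero, hcard]
      have h2 : lineSet (ι i) \ HermitianCurve F s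
          = lineSet (ι i) \ (HermitianCurve F s ∩ lineSet (ι i)) := by
        ext x
        simp only [Set.mem_diff, Set.mem_inter_iff]
        tauto
      rw [h2, Set.ncard_diff (Set.inter_subset_right) (Set.toFinite _), h1, hsec i]
      omega
  have hRncard : R.ncard = n := by
    rw [hR, ← Set.image_univ,
      Set.ncard_image_of_injective _ (fun i j h => hinj (pole_inj hcard (by omega : s ≠ 0) h)),
      Set.ncard_univ, Nat.card_eq_fintype_card, Fintype.card_fin]
  have hdisj1 : Disjoint (HermitianCurve F s) U := by
    rw [Set.disjoint_left]
    rintro x hxH hxU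
    rw [hU] at hxU
    simp only [Set.mem_iUnion, Set.mem_diff] at hxU
    obtain ⟨i, _, h⟩ := hxU
    exact h hxH
  have hdisj2 : Disjoint (HermitianCurve F s ∪ U) R := by
    rw [Set.disjoint_left]
    rintro x hx hxR
    rw [hR] at hxR
    obtain ⟨j, rfl⟩ := hxR
    rcases hx with hx | hx
    · exact pole_not_in_H hs2 hcard hadd hsec j hx
    · rw [hU] at hx
      simp only [Set.mem_iUnion, Set.mem_diff] at hx
      obtain ⟨i, hxi, _⟩ := hx
      exact pole_not_on_iota hs2 hcard hadd hP hPL hHL hιP hιL j i hxi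
  rw [hBBeq, Set.ncard_union_eq hdisj2 (Set.toFinite _) (Set.toFinite _),
    Set.ncard_union_eq hdisj1 (Set.toFinite _) (Set.toFinite _), hHne, hUncard, hRncard,
    Nat.mul_succ]
  omega

end construction

end layer3
end Herm

open Herm in
theorem minimal_t_fold_blocking_set_construction (F : Type*) [Field F] [Fintype F]
    (q t : ℕ) (hq : Fintype.card F = q) (hsq : Nat.sqrt q * Nat.sqrt q = q)
    (hq1 : IsPrimePow q) (ht : 1 ≤ t) (hts : t ≤ Nat.sqrt q + 1)
    (P : Projectivization F (Fin 3 → F)) (hP : P ∈ HermitianCurve F (Nat.sqrt q))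
    (L : Projectivization F (Fin 3 → F)) (hPL : PGinc P L)
    (htangent : {y ∈ HermitianCurve F (Nat.sqrt q) | PGinc y L}.ncard = 1)
    (ι : Fin (t - 1) → Projectivization F (Fin 3 → F)) (hinj : Function.Injective ι)
    (hιP : ∀ i, PGinc P (ι i)) (hιL : ∀ i, ι i ≠ L)
    (hsec : ∀ i, {y ∈ HermitianCurve F (Nat.sqrt q) | PGinc y (ι i)}.ncard = Nat.sqrt q + 1) :
    (HermitianCurve F (Nat.sqrt q) ∪ (⋃ i, {x | PGinc x (ι i)}) ∪
        Set.range (fun i => PGpole (Nat.sqrt q) (ι i))).ncard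
      = q * Nat.sqrt q + 1 + (t - 1) * (q - Nat.sqrt q + 1) ∧
    (∀ ℓ : Projectivization F (Fin 3 → F),
        t ≤ {x ∈ HermitianCurve F (Nat.sqrt q) ∪ (⋃ i, {x | PGinc x (ι i)}) ∪
            Set.range (fun i => PGpole (Nat.sqrt q) (ι i)) | PGinc x ℓ}.ncard) ∧
    (∀ x ∈ HermitianCurve F (Nat.sqrt q) ∪ (⋃ i, {x | PGinc x (ι i)}) ∪
        Set.range (fun i => PGpole (Nat.sqrt q) (ι i)),
        ∃ ℓ : Projectivization F (Fin 3 → F), PGinc x ℓ ∧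
          {y ∈ HermitianCurve F (Nat.sqrt q) ∪ (⋃ i, {x | PGinc x (ι i)}) ∪
              Set.range (fun i => PGpole (Nat.sqrt q) (ι i)) | PGinc y ℓ}.ncard = t) := by
  subst hq
  set s := Nat.sqrt (Fintype.card F) with hs
  have hcard : Fintype.card F = s * s := hsq.symm
  have hadd : ∀ a b : F, (a + b) ^ s = a ^ s + b ^ s := derive_hadd hq1 hsq
  have hs2 : 2 ≤ s := derive_hs2 hsq
  have hsep : ∀ (S : Set (Projectivization F (Fin 3 → F)))
      (ℓ : Projectivization F (Fin 3 → F)),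
      {y ∈ S | PGinc y ℓ} = S ∩ lineSet ℓ := by
    intro S ℓ
    ext y
    simp only [Set.mem_sep_iff, Set.mem_inter_iff, lineSet, Set.mem_setOf_eq]
  have hHL : HermitianCurve F s ∩ lineSet L = {P} := by
    rw [hsep] at htangent
    obtain ⟨a, ha⟩ := Set.ncard_eq_one.mp htangent
    have hPmem : P ∈ HermitianCurve F s ∩ lineSet L := ⟨hP, hPL⟩
    rw [ha] at hPmem ⊢
    rw [Set.mem_singleton_iff] at hPmem
    rw [hPmem]
  have hsec' : ∀ i, (HermitianCurve F s ∩ lineSet (ι i)).ncard = s + 1 := by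
    intro i
    rw [← hsep]
    exact hsec i
  have hBB : HermitianCurve F s ∪ (⋃ i, {x | PGinc x (ι i)}) ∪
      Set.range (fun i => PGpole s (ι i)) = BB s ι := rfl
  have ht1 : t - 1 + 1 = t := by omega
  refine ⟨?_, ?_, ?_⟩
  · rw [hBB, BBcount hs2 hcard hadd hP hPL hHL hinj hιP hιL hsec', hcard]
  · intro ℓ
    rw [hsep, hBB]
    rcases line_dichotomy hs2 hcard hadd ℓ with ⟨z, hz, hzeq, _⟩ | hcnt
    · by_cases hzP : z = P
      · have hℓL : ℓ = L := by rw [hzeq, hzP, ← L_is_pole hs2 hcard hadd hP hPL hHL]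
        rw [hℓL, Lcount hs2 hcard hadd hP hPL hHL hinj hιP hιL]
        omega
      · rw [hzeq, tancount hs2 hcard hadd hP hPL hHL hinj hιP hιL hsec' hz hzP]
        omega
    · have hsub : HermitianCurve F s ∩ lineSet ℓ ⊆ BB s ι ∩ lineSet ℓ :=
        Set.inter_subset_inter_left _ (fun x hx => Or.inl (Or.inl hx))
      have hle := Set.ncard_le_ncard hsub (Set.toFinite _)
      rw [hcnt] at hle
      omega
  · have hHcase : ∀ x ∈ HermitianCurve F s, ∃ ℓ, PGinc x ℓ ∧
        (BB s ι ∩ lineSet ℓ).ncard = t := by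
      intro x hx
      by_cases hxP : x = P
      · refine ⟨L, by rw [hxP]; exact hPL, ?_⟩
        rw [Lcount hs2 hcard hadd hP hPL hHL hinj hιP hιL, ht1]
      · exact ⟨PGpole s x, (mem_HS_iff_inc_pole hs2 hcard hadd).mp hx,
          by rw [tancount hs2 hcard hadd hP hPL hHL hinj hιP hιL hsec' hx hxP, ht1]⟩
    have hRcase : ∀ j, ∃ ℓ, PGinc (PGpole s (ι j)) ℓ ∧ (BB s ι ∩ lineSet ℓ).ncard = t :=
      fun j => ⟨L, pole_on_L hs2 hcard hadd hP hPL hHL hιP j,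
        by rw [Lcount hs2 hcard hadd hP hPL hHL hinj hιP hιL, ht1]⟩
    intro x hx
    simp only [hsep, hBB]
    rcases hx with (hx | hx) | hx
    · exact hHcase x hx
    · rw [Set.mem_iUnion] at hx
      obtain ⟨i, hxi⟩ := hx
      have hxi : PGinc x (ι i) := hxi
      by_cases hxH : x ∈ HermitianCurve F s
      · exact hHcase x hxH
      have hsx : (HermitianCurve F s ∩ lineSet (PGpole s x)).ncard = s + 1 := by
        rcases line_dichotomy hs2 hcard hadd (PGpole s x) with ⟨z, hz, hzeq, _⟩ | hcnt
        · exfalso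
          apply hxH
          rw [pole_inj hcard (by omega : s ≠ 0) hzeq]
          exact hz
        · exact hcnt
      have hbig : ¬ (HermitianCurve F s ∩ lineSet (PGpole s x) ⊆ {P}) := by
        intro hsub
        have h1 := Set.ncard_le_ncard hsub (Set.toFinite _)
        rw [hsx, Set.ncard_singleton] at h1
        omega
      obtain ⟨y, hymem, hynot⟩ := Set.not_subset.mp hbig
      obtain ⟨hyH, hyT⟩ := hymem
      have hyP : y ≠ P := by simpa using hynot
      refine ⟨PGpole s y, (inc_pole_symm hs2 hcard hadd).mp hyT, ?_⟩
      rw [tancount hs2 hcard hadd hP hPL hHL hinj hιP hιL hsec' hyH hyP, ht1]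
    · obtain ⟨j, rfl⟩ := hx
      exact hRcase j
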